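/- Let P be a unique-cover-modular poset and let a, b ∈ P be joined by a finite sequence a = y₀, y₁, …, y_m = b in which, for each j < m, either y_j ⋖ y_{j+1} or y_{j+1} ⋖ y_j. Then there exist n ≥ 0, an index 0 ≤ i ≤ n, and a sequence a = x₀, x₁, …, xₙ = b such that x_{j+1} ⋖ x_j for all j < i and x_j ⋖ x_{j+1} for all i ≤ j < n (the sequence first descends by covering steps, then ascends by covering steps). -/
import Mathlib


/-- A poset is unique-cover-modular if any two distinct elements covering a common
element, or covered by a common element, are covered by a unique common element and
cover a unique common element. -/
def UCM (P : Type*) [PartialOrder P] : Prop :=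
  ∀ x y : P, x ≠ y →
    ((∃ a, a ⋖ x ∧ a ⋖ y) ∨ (∃ b, x ⋖ b ∧ y ⋖ b)) →
    (∃! a, a ⋖ x ∧ a ⋖ y) ∧ (∃! b, x ⋖ b ∧ y ⋖ b)

/-- A valley path from `a` to `t` whose ascending part has length at most `k`. -/
def IsValley {P : Type*} [PartialOrder P] (a t : P) (k : ℕ) : Prop :=
  ∃ (n i : ℕ) (x : ℕ → P), i ≤ n ∧ n - i ≤ k ∧ x 0 = a ∧ x n = t ∧
    (∀ j < i, x (j + 1) ⋖ x j) ∧ (∀ j, i ≤ j → j < n → x j ⋖ x (j + 1))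

lemma isValley_refl {P : Type*} [PartialOrder P] (a : P) (k : ℕ) : IsValley a a k :=
  ⟨0, 0, fun _ => a, le_refl _, by simp, rfl, rfl,
    fun j hj => absurd hj (Nat.not_lt_zero j),
    fun j _ hj => absurd hj (Nat.not_lt_zero j)⟩

lemma isValley_mono {P : Type*} [PartialOrder P] {a t : P} {k k' : ℕ}
    (h : IsValley a t k) (hk : k ≤ k') : IsValley a t k' := by
  obtain ⟨n, i, x, hin, hkk, h0, hn, hd, hu⟩ := h
  exact ⟨n, i, x, hin, le_trans hkk hk, h0, hn, hd, hu⟩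

lemma isValley_up {P : Type*} [PartialOrder P] {a t c : P} {k : ℕ}
    (h : IsValley a t k) (hc : t ⋖ c) : IsValley a c (k + 1) := by
  obtain ⟨n, i, x, hin, hk, h0, hn, hd, hu⟩ := h
  refine ⟨n + 1, i, fun j => if j = n + 1 then c else x j, by omega, by omega, ?_, ?_, ?_, ?_⟩
  · simp only [Nat.zero_ne_add_one, if_false]; exact h0
  · simp
  · intro j hj
    have h1 : j + 1 ≠ n + 1 := by omega
    have h2 : j ≠ n + 1 := by omega
    simp only [h1, h2, if_false]
    exact hd j hj
  · intro j hij hj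
    have h2 : j ≠ n + 1 := by omega
    by_cases hjn : j = n
    · subst hjn
      simp only [h2, if_false, if_pos rfl]
      exact hn ▸ hc
    · have h1 : j + 1 ≠ n + 1 := by omega
      simp only [h1, h2, if_false]
      exact hu j hij (by omega)

lemma isValley_down {P : Type*} [PartialOrder P] (hucm : UCM P) {a : P} :
    ∀ (k : ℕ) {t c : P}, IsValley a t k → c ⋖ t → IsValley a c k := by
  intro k
  induction k with
  | zero =>
    intro t c h hc
    obtain ⟨n, i, x, hin, hk, h0, hn, hd, hu⟩ := h
    have hieq : i = n := by omega
    refine ⟨n + 1, n + 1, fun j => if j = n + 1 then c else x j, le_refl _, by omega, ?_, ?_, ?_, ?_⟩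
    · simp only [Nat.zero_ne_add_one, if_false]; exact h0
    · simp
    · intro j hj
      have h2 : j ≠ n + 1 := by omega
      by_cases hjn : j = n
      · subst hjn
        simp only [h2, if_false, if_pos rfl]
        exact hn ▸ hc
      · have h1 : j + 1 ≠ n + 1 := by omega
        simp only [h1, h2, if_false]
        exact hd j (by omega)
    · intro j h1 h2; omega
  | succ k ih =>
    intro t c h hc
    obtain ⟨n, i, x, hin, hk, h0, hn, hd, hu⟩ := h
    by_cases hieq : i = n
    · -- all descending; append c
      refine ⟨n + 1, n + 1, fun j => if j = n + 1 then c else x j, le_refl _, by omega,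
        ?_, ?_, ?_, ?_⟩
      · simp only [Nat.zero_ne_add_one, if_false]; exact h0
      · simp
      · intro j hj
        have h2 : j ≠ n + 1 := by omega
        by_cases hjn : j = n
        · subst hjn
          simp only [h2, if_false, if_pos rfl]
          exact hn ▸ hc
        · have h1 : j + 1 ≠ n + 1 := by omega
          simp only [h1, h2, if_false]
          exact hd j (by omega)
      · intro j h1 h2; omega
    · -- i < n
      have hilt : i < n := lt_of_le_of_ne hin hieq
      have hvprev : IsValley a (x (n - 1)) k :=
        ⟨n - 1, i, x, by omega, by omega, h0, rfl, hd, fun j hij hj => hu j hij (by omega)⟩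
      have hlast : x (n - 1) ⋖ t := by
        have := hu (n - 1) (by omega) (by omega)
        rwa [show n - 1 + 1 = n by omega, hn] at this
      by_cases hcx : c = x (n - 1)
      · exact isValley_mono (hcx ▸ hvprev) (by omega)
      · obtain ⟨⟨d, ⟨hd1, hd2⟩, _⟩, _⟩ := hucm (x (n - 1)) c (fun he => hcx he.symm)
          (Or.inr ⟨t, hlast, hc⟩)
        exact isValley_up (ih hvprev hd1) hd2

/-- Any two elements joined by a zig-zag path of coverings are joined by a path that first
descends by covering steps and then ascends by covering steps. -/
theorem stmt15 {P : Type*} [PartialOrder P] (hucm : UCM P)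
    (a b : P) (m : ℕ) (y : ℕ → P) (hy0 : y 0 = a) (hym : y m = b)
    (hy : ∀ j < m, y j ⋖ y (j + 1) ∨ y (j + 1) ⋖ y j) :
    ∃ (n i : ℕ) (x : ℕ → P), i ≤ n ∧ x 0 = a ∧ x n = b ∧
      (∀ j < i, x (j + 1) ⋖ x j) ∧
      (∀ j, i ≤ j → j < n → x j ⋖ x (j + 1)) := by
  have key : ∀ m' ≤ m, IsValley a (y m') m' := by
    intro m' hm'
    induction m' with
    | zero => rw [hy0]; exact isValley_refl a 0
    | succ m' ih =>
      have hv := ih (by omega)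
      rcases hy m' (by omega) with h | h
      · exact isValley_up hv h
      · exact isValley_mono (isValley_down hucm m' hv h) (by omega)
  obtain ⟨n, i, x, hin, _, h0, hn, hd, hu⟩ := key m le_rfl
  exact ⟨n, i, x, hin, h0, hym ▸ hn, hd, hu⟩
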